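/- (Theorem 2, excess risk bound for direct weight aggregation.) Let ℓ : ℝ^{d×k} → ℝ be convex and Fréchet differentiable, with gradient ∇ℓ(W) (with respect to the Frobenius inner product) satisfying ‖∇ℓ(W)‖_F ≤ D for all W. Let ΔW* be a global minimizer of ℓ. Let N, S, t_agg ≥ 1 be natural numbers and α ≥ 0 a learning rate. Let W₀ ∈ ℝ^{d×k} and let the directly aggregated weights be W_agg = W₀ − (α/N) Σ_{i=1}^N Σ_{j=1}^S Σ_{t=1}^{t_agg} G_{i,j,t}, where each G_{i,j,t} ∈ ℝ^{d×k} satisfies ‖G_{i,j,t}‖_F ≤ D. Then |ℓ(W_agg) − ℓ(ΔW*)| ≤ α·D²·S·t_agg + c, where c = D·(‖W₀‖_F + ‖ΔW*‖_F); i.e., the excess risk of direct weight averaging is O(S·t_agg), independently of the number of clients N. -/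

import Mathlib

open Matrix

-- Equip matrices with the Frobenius norm.
attribute [local instance] Matrix.frobeniusNormedAddCommGroup Matrix.frobeniusNormedSpace

/-- The Frobenius inner product `⟨M, N⟩_F = tr(Mᵀ N)`. -/
noncomputable def frobInner {d k : ℕ} (M N : Matrix (Fin d) (Fin k) ℝ) : ℝ :=
  (Mᵀ * N).trace

lemma frobInner_eq_sum {d k : ℕ} (M N : Matrix (Fin d) (Fin k) ℝ) :
    frobInner M N = ∑ j, ∑ i, M i j * N i j := by
  simp [frobInner, Matrix.trace, Matrix.diag, Matrix.mul_apply, Matrix.transpose_apply]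

lemma frob_norm_sq {d k : ℕ} (M : Matrix (Fin d) (Fin k) ℝ) :
    ‖M‖ ^ 2 = ∑ j, ∑ i, M i j ^ 2 := by
  rw [Matrix.frobenius_norm_def]
  rw [← Real.rpow_natCast _ 2, ← Real.rpow_mul (by positivity)]
  norm_num
  exact Finset.sum_comm ..

lemma frobInner_le {d k : ℕ} (M N : Matrix (Fin d) (Fin k) ℝ) :
    |frobInner M N| ≤ ‖M‖ * ‖N‖ := by
  have h := Finset.sum_mul_sq_le_sq_mul_sq (Finset.univ : Finset (Fin k × Fin d))
    (fun p => M p.2 p.1) (fun p => N p.2 p.1)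
  have hM : ∑ p : Fin k × Fin d, M p.2 p.1 ^ 2 = ‖M‖ ^ 2 := by
    rw [frob_norm_sq, ← Finset.sum_product']; rfl
  have hN : ∑ p : Fin k × Fin d, N p.2 p.1 ^ 2 = ‖N‖ ^ 2 := by
    rw [frob_norm_sq, ← Finset.sum_product']; rfl
  have hI : frobInner M N = ∑ p : Fin k × Fin d, M p.2 p.1 * N p.2 p.1 := by
    rw [frobInner_eq_sum, ← Finset.sum_product']; rfl
  rw [hM, hN, ← hI] at h
  have h2 : (frobInner M N) ^ 2 ≤ (‖M‖ * ‖N‖) ^ 2 := by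
    calc (frobInner M N) ^ 2 ≤ ‖M‖ ^ 2 * ‖N‖ ^ 2 := h
    _ = (‖M‖ * ‖N‖) ^ 2 := by ring
  exact abs_le.mpr (abs_le_of_sq_le_sq' h2 (by positivity))

lemma grad_ineq {d k : ℕ} (ℓ : Matrix (Fin d) (Fin k) ℝ → ℝ)
    (hconv : ConvexOn ℝ Set.univ ℓ) (W W' : Matrix (Fin d) (Fin k) ℝ)
    (L : Matrix (Fin d) (Fin k) ℝ →L[ℝ] ℝ) (hL : HasFDerivAt ℓ L W) :
    ℓ W - ℓ W' ≤ L (W - W') := by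
  set A : ℝ →ᵃ[ℝ] Matrix (Fin d) (Fin k) ℝ := AffineMap.lineMap W' W with hA
  have hφconv : ConvexOn ℝ Set.univ (ℓ ∘ A) := by
    have := hconv.comp_affineMap A
    rwa [Set.preimage_univ] at this
  have hAderiv : HasDerivAt (fun t : ℝ => A t) (W - W') 1 := by
    have : (fun t : ℝ => A t) = fun t : ℝ => t • (W - W') + W' := by
      funext t; simp [hA, AffineMap.lineMap_apply]
    rw [this]
    have h := ((hasDerivAt_id (1 : ℝ)).smul_const (W - W')).add_const W'
    rwa [one_smul] at h
  have hA1 : A 1 = W := AffineMap.lineMap_apply_one W' W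
  have hderiv : HasDerivAt (ℓ ∘ A) (L (W - W')) 1 := by
    refine HasFDerivAt.comp_hasDerivAt 1 ?_ hAderiv
    rwa [hA1]
  have := hφconv.slope_le_of_hasDerivAt (Set.mem_univ 0) (Set.mem_univ 1)
    zero_lt_one hderiv
  rw [slope_def_field] at this
  simp only [Function.comp_apply, hA1] at this
  have hA0 : A 0 = W' := AffineMap.lineMap_apply_zero W' W
  rw [hA0] at this
  simpa using this

/-- Theorem 2, excess risk bound for direct weight aggregation: for a
convex, Fréchet differentiable loss `ℓ` with Frobenius gradient bounded by `D`, a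
global minimizer `ΔW*`, and direct FedAvg aggregation
`W_agg = W₀ − (α/N) Σ_{i,j,t} G_{i,j,t}` with bounded gradients, the excess risk
satisfies `|ℓ(W_agg) − ℓ(ΔW*)| ≤ α·D²·S·t_agg + c` with
`c = D·(‖W₀‖_F + ‖ΔW*‖_F)` — independent of the number of clients `N`. -/
theorem direct_fedavg_excess_risk (d k N S tagg : ℕ)
    (hN : 1 ≤ N) (hS : 1 ≤ S) (htagg : 1 ≤ tagg)
    (α D : ℝ) (hα : 0 ≤ α)
    (ℓ : Matrix (Fin d) (Fin k) ℝ → ℝ)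
    (hconv : ConvexOn ℝ Set.univ ℓ)
    (g : Matrix (Fin d) (Fin k) ℝ → Matrix (Fin d) (Fin k) ℝ)
    (hdiff : ∀ W : Matrix (Fin d) (Fin k) ℝ,
      ∃ L : Matrix (Fin d) (Fin k) ℝ →L[ℝ] ℝ,
        HasFDerivAt ℓ L W ∧ ∀ H, L H = frobInner (g W) H)
    (hD : ∀ W, ‖g W‖ ≤ D)
    (ΔWstar : Matrix (Fin d) (Fin k) ℝ)
    (hmin : ∀ W, ℓ ΔWstar ≤ ℓ W)
    (W₀ : Matrix (Fin d) (Fin k) ℝ)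
    (G : Fin N → Fin S → Fin tagg → Matrix (Fin d) (Fin k) ℝ)
    (hG : ∀ i j t, ‖G i j t‖ ≤ D) :
    |ℓ (W₀ - (α / (N : ℝ)) • ∑ i, ∑ j, ∑ t, G i j t) - ℓ ΔWstar| ≤
      α * D ^ 2 * S * tagg + D * (‖W₀‖ + ‖ΔWstar‖) := by
  have hDnn : 0 ≤ D := le_trans (norm_nonneg _) (hD W₀)
  have hNpos : (0 : ℝ) < N := by exact_mod_cast hN
  set Wagg := W₀ - (α / (N : ℝ)) • ∑ i, ∑ j, ∑ t, G i j t with hWagg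
  obtain ⟨L, hL, hLrep⟩ := hdiff Wagg
  have h1 : ℓ Wagg - ℓ ΔWstar ≤ frobInner (g Wagg) (Wagg - ΔWstar) := by
    have := grad_ineq ℓ hconv Wagg ΔWstar L hL
    rwa [hLrep] at this
  have h2 : frobInner (g Wagg) (Wagg - ΔWstar) ≤ D * ‖Wagg - ΔWstar‖ := by
    calc frobInner (g Wagg) (Wagg - ΔWstar) ≤ |frobInner (g Wagg) (Wagg - ΔWstar)| :=
          le_abs_self _
      _ ≤ ‖g Wagg‖ * ‖Wagg - ΔWstar‖ := frobInner_le _ _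
      _ ≤ D * ‖Wagg - ΔWstar‖ := by
          exact mul_le_mul_of_nonneg_right (hD _) (norm_nonneg _)
  have hsum : ‖∑ i, ∑ j, ∑ t, G i j t‖ ≤ (N : ℝ) * S * tagg * D := by
    calc ‖∑ i, ∑ j, ∑ t, G i j t‖ ≤ ∑ i, ∑ j, ∑ t, ‖G i j t‖ := by
          refine (norm_sum_le _ _).trans (Finset.sum_le_sum fun i _ => ?_)
          refine (norm_sum_le _ _).trans (Finset.sum_le_sum fun j _ => ?_)
          exact norm_sum_le _ _
      _ ≤ ∑ _i : Fin N, ∑ _j : Fin S, ∑ _t : Fin tagg, D := by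
          refine Finset.sum_le_sum fun i _ => Finset.sum_le_sum fun j _ =>
            Finset.sum_le_sum fun t _ => hG i j t
      _ = (N : ℝ) * S * tagg * D := by
          simp [Finset.sum_const, Finset.card_univ]; ring
  have hnormagg : ‖Wagg - ΔWstar‖ ≤ ‖W₀‖ + α * S * tagg * D + ‖ΔWstar‖ := by
    calc ‖Wagg - ΔWstar‖ ≤ ‖Wagg‖ + ‖ΔWstar‖ := norm_sub_le _ _
      _ ≤ ‖W₀‖ + ‖(α / (N : ℝ)) • ∑ i, ∑ j, ∑ t, G i j t‖ + ‖ΔWstar‖ := by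
          have := norm_sub_le W₀ ((α / (N : ℝ)) • ∑ i, ∑ j, ∑ t, G i j t)
          linarith
      _ ≤ ‖W₀‖ + α * S * tagg * D + ‖ΔWstar‖ := by
          have h3 : ‖(α / (N : ℝ)) • ∑ i, ∑ j, ∑ t, G i j t‖ ≤ α * S * tagg * D := by
            rw [norm_smul, Real.norm_eq_abs, abs_of_nonneg (by positivity)]
            calc (α / N) * ‖∑ i, ∑ j, ∑ t, G i j t‖
                ≤ (α / N) * ((N : ℝ) * S * tagg * D) := by
                  exact mul_le_mul_of_nonneg_left hsum (by positivity)
              _ = α * S * tagg * D := by field_simp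
          linarith
  have habs : |ℓ Wagg - ℓ ΔWstar| = ℓ Wagg - ℓ ΔWstar :=
    abs_of_nonneg (by linarith [hmin Wagg])
  rw [habs]
  calc ℓ Wagg - ℓ ΔWstar ≤ D * ‖Wagg - ΔWstar‖ := le_trans h1 h2
    _ ≤ D * (‖W₀‖ + α * S * tagg * D + ‖ΔWstar‖) :=
        mul_le_mul_of_nonneg_left hnormagg hDnn
    _ = α * D ^ 2 * S * tagg + D * (‖W₀‖ + ‖ΔWstar‖) := by ring
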